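/- For any three binary strings a₁, a₂, a₃ ∈ {0,1}^A, there exist i ≠ j ∈ {1,2,3} and a string m ∈ {0,1}^A such that both Δ(m, a_i) ≤ A/3 + 1 and Δ(m, a_j) ≤ A/3 + 1. -/

import Mathlib

open scoped Classical

private lemma tcard_comm {A : ℕ} (x y z : Fin A → Bool) :
    (Finset.univ.filter fun v => x v ≠ y v ∧ x v ≠ z v).card
      = (Finset.univ.filter fun v => x v ≠ z v ∧ x v ≠ y v).card := by
  congr 1
  ext v
  simp [and_comm]

private lemma key {A : ℕ} (x y z : Fin A → Bool)
    (hyx : (Finset.univ.filter fun v => y v ≠ x v ∧ y v ≠ z v).card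
        ≤ (Finset.univ.filter fun v => x v ≠ y v ∧ x v ≠ z v).card)
    (hzy : (Finset.univ.filter fun v => z v ≠ x v ∧ z v ≠ y v).card
        ≤ (Finset.univ.filter fun v => y v ≠ x v ∧ y v ≠ z v).card) :
    ∃ m : Fin A → Bool,
      (hammingDist m y : ℝ) ≤ (A : ℝ) / 3 + 1 ∧
      (hammingDist m z : ℝ) ≤ (A : ℝ) / 3 + 1 := by
  classical
  set Tx := Finset.univ.filter fun v : Fin A => x v ≠ y v ∧ x v ≠ z v with hTx
  set Ty := Finset.univ.filter fun v : Fin A => y v ≠ x v ∧ y v ≠ z v with hTy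
  set Tz := Finset.univ.filter fun v : Fin A => z v ≠ x v ∧ z v ≠ y v with hTz
  obtain ⟨S, hS, hScard⟩ := Finset.exists_subset_card_eq (s := Ty) (Nat.sub_le Ty.card (A / 3 + 1))
  set m : Fin A → Bool := fun v => if v ∈ S then y v else if x v = y v then x v else z v with hm
  have hdisj_xy : Disjoint Tx Ty := by
    rw [Finset.disjoint_left]
    intro v hv hv'
    simp only [hTx, hTy, Finset.mem_filter] at hv hv'
    cases hx : (x v) <;> cases hy : (y v) <;> cases hz : (z v) <;> simp_all
  have hdisj_xz : Disjoint Tx Tz := by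
    rw [Finset.disjoint_left]
    intro v hv hv'
    simp only [hTx, hTz, Finset.mem_filter] at hv hv'
    cases hx : (x v) <;> cases hy : (y v) <;> cases hz : (z v) <;> simp_all
  have hdisj_yz : Disjoint Ty Tz := by
    rw [Finset.disjoint_left]
    intro v hv hv'
    simp only [hTy, hTz, Finset.mem_filter] at hv hv'
    cases hx : (x v) <;> cases hy : (y v) <;> cases hz : (z v) <;> simp_all
  have hsum : Tx.card + Ty.card + Tz.card ≤ A := by
    have h1 : (Tx ∪ Ty ∪ Tz).card = Tx.card + Ty.card + Tz.card := by
      rw [Finset.card_union_of_disjoint (Finset.disjoint_union_left.mpr ⟨hdisj_xz, hdisj_yz⟩),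
        Finset.card_union_of_disjoint hdisj_xy]
    calc Tx.card + Ty.card + Tz.card = (Tx ∪ Ty ∪ Tz).card := h1.symm
      _ ≤ (Finset.univ : Finset (Fin A)).card := Finset.card_le_univ _
      _ = A := by simp
  have hdy : hammingDist m y = Ty.card - S.card := by
    have hset : (Finset.univ.filter fun v => m v ≠ y v) = Ty \ S := by
      ext v
      by_cases hv : v ∈ S
      · simp [hm, hv]
      · simp only [hm, hv, if_false, Finset.mem_filter, Finset.mem_univ, true_and,
          Finset.mem_sdiff, hTy, not_false_iff, and_true]
        cases hx : (x v) <;> cases hy : (y v) <;> cases hz : (z v) <;> simp_all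
    rw [hammingDist, hset, Finset.card_sdiff_of_subset hS]
  have hdz : hammingDist m z = Tz.card + S.card := by
    have hset : (Finset.univ.filter fun v => m v ≠ z v) = Tz ∪ S := by
      ext v
      by_cases hv : v ∈ S
      · have hvy : v ∈ Ty := hS hv
        simp only [hTy, Finset.mem_filter] at hvy
        simp [hm, hv, Finset.mem_union, hvy.2.2]
      · simp only [hm, hv, if_false, Finset.mem_filter, Finset.mem_univ, true_and,
          Finset.mem_union, or_iff_left hv, hTz]
        cases hx : (x v) <;> cases hy : (y v) <;> cases hz : (z v) <;> simp_all
    have hdisjS : Disjoint Tz S := (hdisj_yz.symm.mono_right hS).symm.symm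
    rw [hammingDist, hset, Finset.card_union_of_disjoint hdisjS.symm.symm]
  refine ⟨m, ?_, ?_⟩
  · have h3 : 3 * hammingDist m y ≤ A + 3 := by
      rw [hdy, hScard]; omega
    have h3' : (3 : ℝ) * (hammingDist m y : ℝ) ≤ (A : ℝ) + 3 := by exact_mod_cast h3
    linarith
  · have h3 : 3 * hammingDist m z ≤ A + 3 := by
      rw [hdz, hScard]; omega
    have h3' : (3 : ℝ) * (hammingDist m z : ℝ) ≤ (A : ℝ) + 3 := by exact_mod_cast h3
    linarith

theorem stmt_14 (A : ℕ) (a : Fin 3 → Fin A → Bool) :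
    ∃ i j : Fin 3, i ≠ j ∧
      ∃ m : Fin A → Bool,
        (hammingDist m (a i) : ℝ) ≤ (A : ℝ) / 3 + 1 ∧
        (hammingDist m (a j) : ℝ) ≤ (A : ℝ) / 3 + 1 := by
  classical
  have e0 : (Finset.univ.filter fun v => a 0 v ≠ a 2 v ∧ a 0 v ≠ a 1 v).card
      = (Finset.univ.filter fun v => a 0 v ≠ a 1 v ∧ a 0 v ≠ a 2 v).card :=
    tcard_comm (a 0) (a 2) (a 1)
  have e1 : (Finset.univ.filter fun v => a 1 v ≠ a 2 v ∧ a 1 v ≠ a 0 v).card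
      = (Finset.univ.filter fun v => a 1 v ≠ a 0 v ∧ a 1 v ≠ a 2 v).card :=
    tcard_comm (a 1) (a 2) (a 0)
  have e2 : (Finset.univ.filter fun v => a 2 v ≠ a 1 v ∧ a 2 v ≠ a 0 v).card
      = (Finset.univ.filter fun v => a 2 v ≠ a 0 v ∧ a 2 v ≠ a 1 v).card :=
    tcard_comm (a 2) (a 1) (a 0)
  rcases le_total (Finset.univ.filter fun v => a 0 v ≠ a 1 v ∧ a 0 v ≠ a 2 v).card
      (Finset.univ.filter fun v => a 1 v ≠ a 0 v ∧ a 1 v ≠ a 2 v).card with h01 | h01 <;>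
    rcases le_total (Finset.univ.filter fun v => a 1 v ≠ a 0 v ∧ a 1 v ≠ a 2 v).card
      (Finset.univ.filter fun v => a 2 v ≠ a 0 v ∧ a 2 v ≠ a 1 v).card with h12 | h12 <;>
    rcases le_total (Finset.univ.filter fun v => a 0 v ≠ a 1 v ∧ a 0 v ≠ a 2 v).card
      (Finset.univ.filter fun v => a 2 v ≠ a 0 v ∧ a 2 v ≠ a 1 v).card with h02 | h02
  · obtain ⟨m, hm1, hm2⟩ := key (a 2) (a 1) (a 0)
      (by rw [e1, e2]; exact h12) (by rw [e0, e1]; exact h01)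
    exact ⟨1, 0, by decide, m, hm1, hm2⟩
  · obtain ⟨m, hm1, hm2⟩ := key (a 2) (a 1) (a 0)
      (by rw [e1, e2]; exact h12) (by rw [e0, e1]; exact h01)
    exact ⟨1, 0, by decide, m, hm1, hm2⟩
  · obtain ⟨m, hm1, hm2⟩ := key (a 1) (a 2) (a 0)
      (by rw [e2, e1]; exact h12) (by rw [e2]; exact h02)
    exact ⟨2, 0, by decide, m, hm1, hm2⟩
  · obtain ⟨m, hm1, hm2⟩ := key (a 1) (a 0) (a 2)
      h01 (by rw [e2]; exact h02)
    exact ⟨0, 2, by decide, m, hm1, hm2⟩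
  · obtain ⟨m, hm1, hm2⟩ := key (a 2) (a 0) (a 1)
      (by rw [e0]; exact h02) (by rw [e1, e0]; exact h01)
    exact ⟨0, 1, by decide, m, hm1, hm2⟩
  · obtain ⟨m, hm1, hm2⟩ := key (a 0) (a 2) (a 1)
      (by rw [e0]; exact h02) h12
    exact ⟨2, 1, by decide, m, hm1, hm2⟩
  · obtain ⟨m, hm1, hm2⟩ := key (a 0) (a 1) (a 2) h01 h12
    exact ⟨1, 2, by decide, m, hm1, hm2⟩
  · obtain ⟨m, hm1, hm2⟩ := key (a 0) (a 1) (a 2) h01 h12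
    exact ⟨1, 2, by decide, m, hm1, hm2⟩
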